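/- For the compressible Euler equations, the function q(w) = (s₀ − s(w))·ρ, where s(w) = log(p(w)/ρ^γ) and p(w) = (γ−1)(E − m²/(2ρ)), is convex on the set {(ρ, m, E) : ρ > 0, p(w) > 0}, for any constant s₀ and γ > 1. -/

import Mathlib

private lemma comb_pos {a b x y : ℝ} (ha : 0 ≤ a) (hb : 0 ≤ b) (hab : a + b = 1)
    (hx : 0 < x) (hy : 0 < y) : 0 < a * x + b * y := by
  have h1 := min_le_left x y
  have h2 := min_le_right x y
  have h3 : 0 < min x y := lt_min hx hy
  nlinarith [mul_le_mul_of_nonneg_left h1 ha, mul_le_mul_of_nonneg_left h2 hb]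

/-- Cauchy–Schwarz: convexity of the kinetic energy `m²/(2ρ)`. -/
private lemma kinetic {a b ρ1 ρ2 m1 m2 : ℝ} (ha : 0 ≤ a) (hb : 0 ≤ b)
    (hρ1 : 0 < ρ1) (hρ2 : 0 < ρ2) (hρc : 0 < a * ρ1 + b * ρ2) :
    (a * m1 + b * m2) ^ 2 / (2 * (a * ρ1 + b * ρ2)) ≤
      a * (m1 ^ 2 / (2 * ρ1)) + b * (m2 ^ 2 / (2 * ρ2)) := by
  rw [← sub_nonneg]
  have expand : a * (m1 ^ 2 / (2 * ρ1)) + b * (m2 ^ 2 / (2 * ρ2)) -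
      (a * m1 + b * m2) ^ 2 / (2 * (a * ρ1 + b * ρ2)) =
      a * b * (m1 * ρ2 - m2 * ρ1) ^ 2 / (2 * ρ1 * ρ2 * (a * ρ1 + b * ρ2)) := by
    field_simp
    ring
  rw [expand]
  apply div_nonneg
  · exact mul_nonneg (mul_nonneg ha hb) (sq_nonneg _)
  · positivity

/-- Log-sum inequality (joint convexity of relative entropy). -/
private lemma logsum {a b x1 x2 y1 y2 : ℝ} (ha : 0 ≤ a) (hb : 0 ≤ b)
    (hx1 : 0 < x1) (hx2 : 0 < x2) (hy1 : 0 < y1) (hy2 : 0 < y2)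
    (hY : 0 < a * y1 + b * y2) :
    (a * x1 + b * x2) * Real.log ((a * x1 + b * x2) / (a * y1 + b * y2)) ≤
      a * (x1 * Real.log (x1 / y1)) + b * (x2 * Real.log (x2 / y2)) := by
  set Y := a * y1 + b * y2 with hYdef
  have hw1 : 0 ≤ a * y1 / Y := by positivity
  have hw2 : 0 ≤ b * y2 / Y := by positivity
  have hwsum : a * y1 / Y + b * y2 / Y = 1 := by
    field_simp
    exact hYdef.symm
  have h := Real.convexOn_mul_log.2 (Set.mem_Ici.mpr (le_of_lt (div_pos hx1 hy1)))
    (Set.mem_Ici.mpr (le_of_lt (div_pos hx2 hy2))) hw1 hw2 hwsum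
  simp only [smul_eq_mul] at h
  have harg : a * y1 / Y * (x1 / y1) + b * y2 / Y * (x2 / y2) = (a * x1 + b * x2) / Y := by
    field_simp
  rw [harg] at h
  have h2 := mul_le_mul_of_nonneg_left h hY.le
  have e0 : Y * ((a * x1 + b * x2) / Y * Real.log ((a * x1 + b * x2) / Y)) =
      (a * x1 + b * x2) * Real.log ((a * x1 + b * x2) / Y) := by
    field_simp
  have e1 : Y * (a * y1 / Y * (x1 / y1 * Real.log (x1 / y1)) +
      b * y2 / Y * (x2 / y2 * Real.log (x2 / y2))) =
      a * (x1 * Real.log (x1 / y1)) + b * (x2 * Real.log (x2 / y2)) := by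
    field_simp
  rw [e0, e1] at h2
  exact h2

/-- The function `q(w) = (s₀ - s(w))·ρ`, with `s = log(p/ρ^γ)` and
`p = (γ-1)(E - m²/(2ρ))`, is convex on `{ρ > 0, p > 0}`. -/
theorem stmt_7 (γ s₀ : ℝ) (hγ : 1 < γ) :
    ConvexOn ℝ
      {w : ℝ × ℝ × ℝ | 0 < w.1 ∧ 0 < (γ - 1) * (w.2.2 - w.2.1 ^ 2 / (2 * w.1))}
      (fun w => (s₀ - Real.log
        ((γ - 1) * (w.2.2 - w.2.1 ^ 2 / (2 * w.1)) / w.1 ^ γ)) * w.1) := by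
  have hγ1 : (0:ℝ) < γ - 1 := by linarith
  -- decomposition of the entropy function
  have decomp : ∀ ρ u : ℝ, 0 < ρ → 0 < u →
      (s₀ - Real.log ((γ - 1) * u / ρ ^ γ)) * ρ =
      s₀ * ρ - Real.log (γ - 1) * ρ + ρ * Real.log (ρ / u) + (γ - 1) * (ρ * Real.log ρ) := by
    intro ρ u hρ hu
    rw [Real.log_div (by positivity) (by positivity), Real.log_mul hγ1.ne' hu.ne',
      Real.log_rpow hρ, Real.log_div hρ.ne' hu.ne']
    ring
  constructor
  · -- convexity of the set
    intro w1 h1 w2 h2 a b ha hb hab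
    obtain ⟨hρ1, hp1⟩ := h1
    obtain ⟨hρ2, hp2⟩ := h2
    have hu1 : 0 < w1.2.2 - w1.2.1 ^ 2 / (2 * w1.1) :=
      lt_of_mul_lt_mul_left (by simpa using hp1) hγ1.le
    have hu2 : 0 < w2.2.2 - w2.2.1 ^ 2 / (2 * w2.1) :=
      lt_of_mul_lt_mul_left (by simpa using hp2) hγ1.le
    have hρc : 0 < a * w1.1 + b * w2.1 := comb_pos ha hb hab hρ1 hρ2
    have hk := kinetic (m1 := w1.2.1) (m2 := w2.2.1) ha hb hρ1 hρ2 hρc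
    have hU : 0 < a * (w1.2.2 - w1.2.1 ^ 2 / (2 * w1.1)) +
        b * (w2.2.2 - w2.2.1 ^ 2 / (2 * w2.1)) := comb_pos ha hb hab hu1 hu2
    refine ⟨?_, ?_⟩
    · simpa [Prod.smul_fst, smul_eq_mul] using hρc
    · simp only [Set.mem_setOf_eq, Prod.fst_add, Prod.snd_add, Prod.smul_fst, Prod.smul_snd,
        smul_eq_mul]
      apply mul_pos hγ1
      nlinarith [hk]
  · -- the convexity inequality
    intro w1 h1 w2 h2 a b ha hb hab
    obtain ⟨hρ1, hp1⟩ := h1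
    obtain ⟨hρ2, hp2⟩ := h2
    set ρ1 := w1.1; set m1 := w1.2.1; set E1 := w1.2.2
    set ρ2 := w2.1; set m2 := w2.2.1; set E2 := w2.2.2
    have hu1 : 0 < E1 - m1 ^ 2 / (2 * ρ1) :=
      lt_of_mul_lt_mul_left (by simpa using hp1) hγ1.le
    have hu2 : 0 < E2 - m2 ^ 2 / (2 * ρ2) :=
      lt_of_mul_lt_mul_left (by simpa using hp2) hγ1.le
    have hρc : 0 < a * ρ1 + b * ρ2 := comb_pos ha hb hab hρ1 hρ2
    have hk := kinetic (m1 := m1) (m2 := m2) ha hb hρ1 hρ2 hρc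
    set u1 := E1 - m1 ^ 2 / (2 * ρ1) with hu1def
    set u2 := E2 - m2 ^ 2 / (2 * ρ2) with hu2def
    set U := a * u1 + b * u2 with hUdef
    have hU : 0 < U := comb_pos ha hb hab hu1 hu2
    -- internal energy of the combined state
    set uc := (a * E1 + b * E2) - (a * m1 + b * m2) ^ 2 / (2 * (a * ρ1 + b * ρ2)) with hucdef
    have hUuc : U ≤ uc := by
      rw [hUdef, hucdef, hu1def, hu2def]
      have := hk
      ring_nf
      ring_nf at this
      linarith
    have huc : 0 < uc := lt_of_lt_of_le hU hUuc
    -- express all three function values with decomp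
    simp only [smul_eq_mul, Prod.fst_add, Prod.snd_add, Prod.smul_fst, Prod.smul_snd,
      smul_eq_mul]
    rw [decomp ρ1 u1 hρ1 hu1, decomp ρ2 u2 hρ2 hu2]
    rw [show (a * E1 + b * E2) - (a * m1 + b * m2) ^ 2 / (2 * (a * ρ1 + b * ρ2)) = uc from rfl]
    rw [decomp (a * ρ1 + b * ρ2) uc hρc huc]
    -- monotonicity in the internal energy
    have mono : (a * ρ1 + b * ρ2) * Real.log ((a * ρ1 + b * ρ2) / uc) ≤
        (a * ρ1 + b * ρ2) * Real.log ((a * ρ1 + b * ρ2) / U) := by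
      apply mul_le_mul_of_nonneg_left _ hρc.le
      apply Real.log_le_log (by positivity)
      exact div_le_div_of_nonneg_left hρc.le hU hUuc
    -- log-sum inequality for the relative-entropy part
    have hls := logsum (x1 := ρ1) (x2 := ρ2) (y1 := u1) (y2 := u2) ha hb hρ1 hρ2 hu1 hu2 hU
    -- convexity of ρ log ρ
    have hml := Real.convexOn_mul_log.2 (Set.mem_Ici.mpr hρ1.le) (Set.mem_Ici.mpr hρ2.le)
      ha hb hab
    simp only [smul_eq_mul] at hml
    have hml2 : (γ - 1) * ((a * ρ1 + b * ρ2) * Real.log (a * ρ1 + b * ρ2)) ≤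
        (γ - 1) * (a * (ρ1 * Real.log ρ1) + b * (ρ2 * Real.log ρ2)) :=
      mul_le_mul_of_nonneg_left hml hγ1.le
    nlinarith [mono, hls, hml2]
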